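/- Let w be an involution in a Weyl group W and s a simple reflection with sw ≠ ws. Then s maps R_w⁺ = {α ∈ R⁺ : w(α) = −α} bijectively onto R_{sws}⁺ = {α ∈ R⁺ : sws(α) = −α}. -/

import Mathlib

open scoped RealInnerProductSpace

variable {V : Type*} [NormedAddCommGroup V] [InnerProductSpace ℝ V] [FiniteDimensional ℝ V]

/-- The reflection in the hyperplane orthogonal to `α`. -/
noncomputable def wrefl (α : V) : V ≃ₗᵢ[ℝ] V := Submodule.reflection (ℝ ∙ α)ᗮ

/-- A (reduced) root system in a real inner product space. -/
structure IsRootSystem (R : Finset V) : Prop where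
  ne_zero : (0 : V) ∉ R
  span_eq_top : Submodule.span ℝ (R : Set V) = ⊤
  reduced : ∀ α ∈ R, ∀ c : ℝ, c • α ∈ R → c = 1 ∨ c = -1
  refl_mem : ∀ α ∈ R, ∀ β ∈ R, wrefl α β ∈ R
  pairing_int : ∀ α ∈ R, ∀ β ∈ R, ∃ n : ℤ, 2 * ⟪α, β⟫ / ⟪α, α⟫ = (n : ℝ)

/-- The Weyl group of a root system, as a group of linear isometries. -/
noncomputable def weylGroup (R : Finset V) : Subgroup (V ≃ₗᵢ[ℝ] V) :=
  Subgroup.closure (wrefl '' (R : Set V))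

/-- A system of positive roots. -/
structure IsPositiveSystem (R Rpos : Finset V) : Prop where
  subset : Rpos ⊆ R
  mem_or_neg_mem : ∀ α ∈ R, α ∈ Rpos ∨ -α ∈ Rpos
  not_mem_and_neg_mem : ∀ α ∈ Rpos, -α ∉ Rpos
  add_mem : ∀ α ∈ Rpos, ∀ β ∈ Rpos, α + β ∈ R → α + β ∈ Rpos

/-- A simple (indecomposable) positive root. -/
def IsSimpleRoot (Rpos : Finset V) (α : V) : Prop :=
  α ∈ Rpos ∧ ¬∃ β ∈ Rpos, ∃ γ ∈ Rpos, α = β + γ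

/-- The length of `w`, i.e. the number of positive roots sent by `w` to negative roots. -/
noncomputable def len (Rpos : Finset V) (w : V ≃ₗᵢ[ℝ] V) : ℕ := by
  classical exact (Rpos.filter fun α => w α ∉ Rpos).card

/-- The coroot attached to a root. -/
noncomputable def cv (α : V) : V := (2 / ⟪α, α⟫) • α

/-- The dominance order: `α ≤ α'` iff `α' - α` is a nonnegative combination of
positive roots. -/
def rle (Rpos : Finset V) (α α' : V) : Prop :=
  ∃ c : V → ℝ, (∀ β, 0 ≤ c β) ∧ α' - α = ∑ β ∈ Rpos, c β • β

/-- `α` is maximal in `S` for the dominance order. -/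
def IsMaxIn (Rpos : Finset V) (S : Set V) (α : V) : Prop :=
  α ∈ S ∧ ∀ α' ∈ S, rle Rpos α α' → rle Rpos α' α

/-- The `n`-th layer of Kostant's cascade: the maximal positive roots among those
orthogonal to all roots of the previous layers. -/
def cascadeLevel (Rpos : Finset V) : ℕ → Set V
  | n =>
    {α | IsMaxIn Rpos
      {β | β ∈ Rpos ∧ ∀ m, m < n → ∀ γ ∈ cascadeLevel Rpos m, ⟪γ, β⟫ = 0} α}
  termination_by n => n

/-- Kostant's cascade of orthogonal roots. -/
def cascade (Rpos : Finset V) : Set V := ⋃ n, cascadeLevel Rpos n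

/-- The set of positive roots on which an involution `w` acts by `-1`. -/
noncomputable def posNegSet (Rpos : Finset V) (w : V ≃ₗᵢ[ℝ] V) : Finset V := by
  classical exact Rpos.filter fun α => w α = -α

/-- The element `r_w`: the sum of the coroots of the cascade of the root system
`R_w = {α ∈ R : w α = -α}`. -/
noncomputable def rInv (Rpos : Finset V) (w : V ≃ₗᵢ[ℝ] V) : V :=
  ∑ α ∈ posNegSet Rpos w, Set.indicator (cascade (posNegSet Rpos w)) cv α

section lemmas

lemma wrefl_apply (α : V) (hα : α ≠ 0) (x : V) :
    wrefl α x = x - (2 * ⟪α, x⟫ / ⟪α, α⟫) • α := by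
  have hαα : ⟪α, α⟫ ≠ 0 := fun h => hα (inner_self_eq_zero.mp h)
  set c : ℝ := ⟪α, x⟫ / ⟪α, α⟫ with hc
  have hq : x - c • α ∈ (ℝ ∙ α)ᗮ := by
    rw [Submodule.mem_orthogonal_singleton_iff_inner_right, inner_sub_right,
      real_inner_smul_right, hc]
    field_simp
    ring
  have hp : c • α ∈ ((ℝ ∙ α)ᗮ)ᗮ :=
    Submodule.le_orthogonal_orthogonal _
      (Submodule.smul_mem _ c (Submodule.mem_span_singleton_self α))
  have h2 : (2 * ⟪α, x⟫ / ⟪α, α⟫) = 2 * c := by rw [hc]; ring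
  calc wrefl α x = wrefl α ((x - c • α) + c • α) := by rw [sub_add_cancel]
    _ = wrefl α (x - c • α) + wrefl α (c • α) := map_add _ _ _
    _ = (x - c • α) + -(c • α) := by
        rw [wrefl, Submodule.reflection_mem_subspace_eq_self hq,
          Submodule.reflection_mem_subspace_orthogonalComplement_eq_neg hp]
    _ = x - (2 * ⟪α, x⟫ / ⟪α, α⟫) • α := by rw [h2]; module

lemma wrefl_self (α : V) : wrefl α α = -α :=
  Submodule.reflection_mem_subspace_orthogonalComplement_eq_neg
    (Submodule.le_orthogonal_orthogonal _ (Submodule.mem_span_singleton_self α))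

lemma wrefl_wrefl (α x : V) : wrefl α (wrefl α x) = x := Submodule.reflection_reflection _ x

variable {R Rpos : Finset V}

lemma inner_self_pos' {x : V} (hx : x ≠ 0) : (0:ℝ) < ⟪x, x⟫ :=
  lt_of_le_of_ne real_inner_self_nonneg (fun h => hx (inner_self_eq_zero.mp h.symm))

lemma root_ne_zero (hR : IsRootSystem R) {γ : V} (hγ : γ ∈ R) : γ ≠ 0 :=
  fun h => hR.ne_zero (h ▸ hγ)

lemma neg_root_mem (hR : IsRootSystem R) {γ : V} (hγ : γ ∈ R) : -γ ∈ R := by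
  have := hR.refl_mem γ hγ γ hγ
  rwa [wrefl_self] at this

/-- Strict Cauchy-Schwarz for non-proportional roots. -/
lemma strict_cs (hR : IsRootSystem R) {α β : V} (hαR : α ∈ R) (hβR : β ∈ R)
    (h1 : β ≠ α) (h2 : β ≠ -α) : ⟪α, β⟫ ^ 2 < ⟪α, α⟫ * ⟪β, β⟫ := by
  have hα0 : α ≠ 0 := root_ne_zero hR hαR
  have hβ0 : β ≠ 0 := root_ne_zero hR hβR
  have hnα : ‖α‖ ≠ 0 := norm_ne_zero_iff.mpr hα0
  have hle : |⟪α, β⟫| ≤ ‖α‖ * ‖β‖ := abs_real_inner_le_norm α β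
  have hA : ⟪α, α⟫ = ‖α‖ * ‖α‖ := real_inner_self_eq_norm_mul_norm α
  have hB : ⟪β, β⟫ = ‖β‖ * ‖β‖ := real_inner_self_eq_norm_mul_norm β
  rcases lt_or_eq_of_le hle with h | h
  · have habs : (0:ℝ) ≤ |⟪α,β⟫| := abs_nonneg _
    nlinarith [abs_nonneg (⟪α,β⟫), sq_abs (⟪α,β⟫)]
  · exfalso
    rcases abs_eq (by positivity : (0:ℝ) ≤ ‖α‖ * ‖β‖) |>.mp h with h | h
    · have := inner_eq_norm_mul_iff_real.mp h
      -- ‖β‖ • α = ‖α‖ • β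
      have hβeq : β = (‖β‖ / ‖α‖) • α := by
        rw [div_eq_inv_mul, mul_smul, this, smul_smul, inv_mul_cancel₀ hnα, one_smul]
      rcases hR.reduced α hαR (‖β‖ / ‖α‖) (by rw [← hβeq]; exact hβR) with hc | hc
      · exact h1 (by rw [hβeq, hc, one_smul])
      · exact h2 (by rw [hβeq, hc, neg_one_smul])
    · have h' : ⟪α, -β⟫ = ‖α‖ * ‖-β‖ := by
        rw [inner_neg_right, norm_neg, h]; ring
      have := inner_eq_norm_mul_iff_real.mp h'
      -- ‖-β‖ • α = ‖α‖ • (-β)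
      have hβeq : β = (-(‖β‖ / ‖α‖)) • α := by
        rw [norm_neg] at this
        rw [neg_smul, div_eq_inv_mul, mul_smul, this, smul_smul, inv_mul_cancel₀ hnα,
          one_smul, neg_neg]
      rcases hR.reduced α hαR (-(‖β‖ / ‖α‖)) (by rw [← hβeq]; exact hβR) with hc | hc
      · exact h1 (by rw [hβeq, hc, one_smul])
      · exact h2 (by rw [hβeq, hc, neg_one_smul])

end lemmas

section key
variable {R Rpos : Finset V}

/-- Base case: pairing in {-1,0,1}. -/
lemma wrefl_mem_pos_base (hR : IsRootSystem R) (hP : IsPositiveSystem R Rpos)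
    {α : V} (hα : IsSimpleRoot Rpos α) {β : V} (hβ : β ∈ Rpos)
    {m : ℤ} (hm' : 2 * ⟪α, β⟫ = (m : ℝ) * ⟪α, α⟫) (hm1 : m.natAbs ≤ 1) :
    wrefl α β ∈ Rpos := by
  have hαR : α ∈ R := hP.subset hα.1
  have hβR : β ∈ R := hP.subset hβ
  have hα0 : α ≠ 0 := root_ne_zero hR hαR
  have hαα : (0:ℝ) < ⟪α, α⟫ := inner_self_pos' hα0
  have hm : 2 * ⟪α, β⟫ / ⟪α, α⟫ = (m : ℝ) := by
    rw [hm']; field_simp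
  have hsβ : wrefl α β = β - (m : ℝ) • α := by rw [wrefl_apply α hα0, hm]
  have hsβR : wrefl α β ∈ R := hR.refl_mem α hαR β hβR
  by_contra hcon
  have hδ : -(wrefl α β) ∈ Rpos := (hP.mem_or_neg_mem _ hsβR).resolve_left hcon
  have hb1 : -1 ≤ m := by omega
  have hb2 : m ≤ 1 := by omega
  interval_cases m
  · -- m = -1 : wrefl α β = β + α ∈ Rpos
    have h1 : wrefl α β = β + α := by rw [hsβ]; push_cast; module
    refine hcon ?_
    rw [h1]
    exact hP.add_mem β hβ α hα.1 (by rwa [h1] at hsβR)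
  · -- m = 0 : wrefl α β = β
    have h1 : wrefl α β = β := by rw [hsβ]; push_cast; module
    exact hcon (by rw [h1]; exact hβ)
  · -- m = 1 : α = β + (α - β) is a decomposition
    have h1 : -(wrefl α β) = α - β := by rw [hsβ]; push_cast; module
    exact hα.2 ⟨β, hβ, α - β, by rw [← h1]; exact hδ, by module⟩

/-- Main induction. -/
lemma wrefl_mem_pos_aux (hR : IsRootSystem R) (hP : IsPositiveSystem R Rpos)
    {α : V} (hα : IsSimpleRoot Rpos α) :
    ∀ n : ℕ, ∀ β : V, β ∈ Rpos → β ≠ α → ∀ m : ℤ,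
      2 * ⟪α, β⟫ = (m : ℝ) * ⟪α, α⟫ → m.natAbs ≤ n → wrefl α β ∈ Rpos := by
  have hαR : α ∈ R := hP.subset hα.1
  have hα0 : α ≠ 0 := root_ne_zero hR hαR
  have hαα : (0:ℝ) < ⟪α, α⟫ := inner_self_pos' hα0
  intro n
  induction n with
  | zero =>
    intro β hβ hβα m hm' hn
    exact wrefl_mem_pos_base hR hP hα hβ hm' (le_trans hn (by norm_num))
  | succ n ih =>
    intro β hβ hβα m hm' hn
    by_cases hsmall : m.natAbs ≤ 1
    · exact wrefl_mem_pos_base hR hP hα hβ hm' hsmall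
    -- now |m| ≥ 2
    have hβR : β ∈ R := hP.subset hβ
    have hβ0 : β ≠ 0 := root_ne_zero hR hβR
    have hββ : (0:ℝ) < ⟪β, β⟫ := inner_self_pos' hβ0
    have hβnα : β ≠ -α := fun h => hP.not_mem_and_neg_mem α hα.1 (h ▸ hβ)
    have hm : 2 * ⟪α, β⟫ / ⟪α, α⟫ = (m : ℝ) := by rw [hm']; field_simp
    have hsβ : wrefl α β = β - (m : ℝ) • α := by rw [wrefl_apply α hα0, hm]
    have hsβR : wrefl α β ∈ R := hR.refl_mem α hαR β hβR
    obtain ⟨k, hk⟩ := hR.pairing_int β hβR α hαR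
    have hk' : 2 * ⟪α, β⟫ = (k : ℝ) * ⟪β, β⟫ := by
      rw [div_eq_iff hββ.ne'] at hk
      rw [real_inner_comm β α]; exact hk
    have hcs : ⟪α, β⟫ ^ 2 < ⟪α, α⟫ * ⟪β, β⟫ := strict_cs hR hαR hβR hβα hβnα
    have hI : ⟪α, β⟫ ≠ 0 := by
      intro h
      rw [h] at hm'
      have h0 : (m : ℝ) * ⟪α, α⟫ = 0 := by linarith
      rcases mul_eq_zero.mp h0 with h' | h'
      · have : m = 0 := by exact_mod_cast h'
        omega
      · exact hαα.ne' h'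
    have hI2 : (0:ℝ) < ⟪α, β⟫ ^ 2 := lt_of_le_of_ne (sq_nonneg _) (Ne.symm (pow_ne_zero 2 hI))
    have h4 : ((m:ℝ) * k) * (⟪α, α⟫ * ⟪β, β⟫) = 4 * ⟪α, β⟫ ^ 2 := by
      linear_combination (-(k:ℝ) * ⟪β, β⟫) * hm' + (-2 * ⟪α, β⟫) * hk'
    have hpos : (0:ℝ) < ⟪α, α⟫ * ⟪β, β⟫ := mul_pos hαα hββ
    have h5 : ((m:ℝ) * k) < 4 := by nlinarith [hcs, hpos, h4]
    have h6 : (0:ℝ) < (m:ℝ) * k := by nlinarith [h4, hpos, hI2]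
    have hmk4 : (m * k : ℤ) < 4 := by exact_mod_cast (by push_cast; exact h5 : ((m*k:ℤ):ℝ) < 4)
    have hmk3 : m * k ≤ 3 := by omega
    have hmk0 : (0:ℤ) < m * k := by exact_mod_cast (by push_cast; exact h6 : ((0:ℤ):ℝ) < ((m*k : ℤ):ℝ))
    rcases le_or_gt 2 m with hm2 | hm2'
    · -- m ≥ 2 : k = 1 and m ≤ 3
      have hk1 : k = 1 := by nlinarith
      have hm3 : m ≤ 3 := by nlinarith
      -- α - β = wrefl β α ∈ R
      have hhk : 2 * ⟪β, α⟫ / ⟪β, β⟫ = ((1:ℤ) : ℝ) := by rw [← hk1]; exact hk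
      have hsα : wrefl β α = α - β := by
        rw [wrefl_apply β hβ0, hhk]; push_cast; module
      have hαβR : α - β ∈ R := by rw [← hsα]; exact hR.refl_mem β hβR α hαR
      rcases hP.mem_or_neg_mem _ hαβR with hab | hab
      · exact absurd ⟨β, hβ, α - β, hab, by module⟩ hα.2
      · -- β - α ∈ Rpos
        have hba : β - α ∈ Rpos := by rwa [neg_sub] at hab
        have hβ₂α : β - α ≠ α := by
          intro h
          have hβ2 : β = α + α := sub_eq_iff_eq_add.mp h
          have h2 : (2:ℝ) • α = β := by rw [hβ2]; module
          rcases hR.reduced α hαR 2 (by rw [h2]; exact hβR) with h' | h' <;> norm_num at h'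
        have hm2' : 2 * ⟪α, β - α⟫ = ((m - 2 : ℤ) : ℝ) * ⟪α, α⟫ := by
          rw [inner_sub_right]; push_cast; linarith [hm']
        have hnat : (m - 2).natAbs ≤ n := by omega
        have hres := ih (β - α) hba hβ₂α (m - 2) hm2' hnat
        -- wrefl α (β - α) = α - (-(wrefl α β)), so α decomposes
        have heq : wrefl α (β - α) = α - (-(wrefl α β)) := by
          have h1 : 2 * ⟪α, β - α⟫ / ⟪α, α⟫ = ((m - 2 : ℤ) : ℝ) := by
            rw [hm2']; field_simp
          rw [wrefl_apply α hα0, h1, hsβ]; push_cast; module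
        by_contra hcon
        have hδ : -(wrefl α β) ∈ Rpos := (hP.mem_or_neg_mem _ hsβR).resolve_left hcon
        exact hα.2 ⟨-(wrefl α β), hδ, wrefl α (β - α), hres, by rw [heq]; module⟩
    · -- m ≤ -2 : k = -1
      have hmneg : m ≤ -2 := by omega
      have hk1 : k = -1 := by nlinarith
      have hhk : 2 * ⟪β, α⟫ / ⟪β, β⟫ = ((-1:ℤ) : ℝ) := by rw [← hk1]; exact hk
      have hsα : wrefl β α = α + β := by
        rw [wrefl_apply β hβ0, hhk]; push_cast; module
      have hαβR : α + β ∈ R := by rw [← hsα]; exact hR.refl_mem β hβR α hαR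
      have hβ₁ : β + α ∈ Rpos := hP.add_mem β hβ α hα.1 (by rwa [add_comm] at hαβR)
      have hβ₁α : β + α ≠ α := fun h => hβ0 (by linear_combination (norm := module) h)
      have hm1' : 2 * ⟪α, β + α⟫ = ((m + 2 : ℤ) : ℝ) * ⟪α, α⟫ := by
        rw [inner_add_right]; push_cast; linarith [hm']
      have hnat : (m + 2).natAbs ≤ n := by omega
      have hres := ih (β + α) hβ₁ hβ₁α (m + 2) hm1' hnat
      by_contra hcon
      have hδ : -(wrefl α β) ∈ Rpos := (hP.mem_or_neg_mem _ hsβR).resolve_left hcon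
      -- wrefl α (β + α) = -( δ + α ) where δ = -(wrefl α β)
      have heq : wrefl α (β + α) = -((-(wrefl α β)) + α) := by
        have h1 : 2 * ⟪α, β + α⟫ / ⟪α, α⟫ = ((m + 2 : ℤ) : ℝ) := by rw [hm1']; field_simp
        rw [wrefl_apply α hα0, h1, hsβ]; push_cast; module
      have hδαR : (-(wrefl α β)) + α ∈ R := by
        have := neg_root_mem hR (hP.subset hres)
        rwa [heq, neg_neg] at this
      have hδα : (-(wrefl α β)) + α ∈ Rpos := hP.add_mem _ hδ α hα.1 hδαR
      exact hP.not_mem_and_neg_mem _ hδα (by rwa [heq] at hres)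

lemma wrefl_mem_pos (hR : IsRootSystem R) (hP : IsPositiveSystem R Rpos)
    {α : V} (hα : IsSimpleRoot Rpos α) {β : V} (hβ : β ∈ Rpos) (hβα : β ≠ α) :
    wrefl α β ∈ Rpos := by
  have hαR : α ∈ R := hP.subset hα.1
  have hβR : β ∈ R := hP.subset hβ
  have hαα : (0:ℝ) < ⟪α, α⟫ := inner_self_pos' (root_ne_zero hR hαR)
  obtain ⟨m, hm⟩ := hR.pairing_int α hαR β hβR
  have hm' : 2 * ⟪α, β⟫ = (m : ℝ) * ⟪α, α⟫ := (div_eq_iff hαα.ne').mp hm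
  exact wrefl_mem_pos_aux hR hP hα m.natAbs β hβ hβα m hm' le_rfl

end key

lemma wrefl_comm_of_neg {α : V} (hα0 : α ≠ 0) (w : V ≃ₗᵢ[ℝ] V) (hw2 : w * w = 1)
    (hwα : w α = -α) : wrefl α * w = w * wrefl α := by
  have hww : ∀ v, w (w v) = v := fun v => DFunLike.congr_fun hw2 v
  refine LinearIsometryEquiv.ext fun v => ?_
  show wrefl α (w v) = w (wrefl α v)
  rw [wrefl_apply α hα0, wrefl_apply α hα0 v, map_sub, LinearIsometryEquiv.map_smul, hwα]
  have h1 : ⟪α, w v⟫ = -⟪α, v⟫ := by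
    calc ⟪α, w v⟫ = ⟪w (w α), w v⟫ := by rw [hww]
      _ = ⟪w α, v⟫ := w.inner_map_map (w α) v
      _ = -⟪α, v⟫ := by rw [hwα, inner_neg_left]
  rw [h1]
  have hsc : 2 * -⟪α, v⟫ / ⟪α, α⟫ = -(2 * ⟪α, v⟫ / ⟪α, α⟫) := by ring
  rw [hsc]
  module


/-- If `w` is an involution in the Weyl group and `s` is a simple reflection with
`sw ≠ ws`, then `s` maps `R_w⁺ = {α ∈ R⁺ : w α = -α}` bijectively onto `R_{sws}⁺`. -/
theorem simple_reflection_bijOn_posNegRoots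
    {R Rpos : Finset V} (hR : IsRootSystem R) (hP : IsPositiveSystem R Rpos)
    (w : V ≃ₗᵢ[ℝ] V) (hw : w ∈ weylGroup R) (hw2 : w * w = 1)
    (α : V) (hα : IsSimpleRoot Rpos α)
    (hnc : wrefl α * w ≠ w * wrefl α) :
    Set.BijOn (wrefl α) {β : V | β ∈ Rpos ∧ w β = -β}
      {β : V | β ∈ Rpos ∧ (wrefl α * w * wrefl α) β = -β} := by
  have hα0 : α ≠ 0 := root_ne_zero hR (hP.subset hα.1)
  have hwa : w α ≠ -α := fun h => hnc (wrefl_comm_of_neg hα0 w hw2 h)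
  have hss : ∀ x, wrefl α (wrefl α x) = x := wrefl_wrefl α
  refine ⟨?_, (wrefl α).injective.injOn, ?_⟩
  · rintro β ⟨hβp, hβw⟩
    have hβα : β ≠ α := fun h => hwa (h ▸ hβw)
    refine ⟨wrefl_mem_pos hR hP hα hβp hβα, ?_⟩
    show wrefl α (w (wrefl α (wrefl α β))) = -(wrefl α β)
    rw [hss, hβw, map_neg]
  · rintro γ ⟨hγp, hγw⟩
    replace hγw : wrefl α (w (wrefl α γ)) = -γ := hγw
    have hγα : γ ≠ α := by
      intro h
      rw [h, wrefl_self, map_neg, map_neg, neg_inj] at hγw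
      have := congrArg (wrefl α) hγw
      rw [hss, wrefl_self] at this
      exact hwa this
    refine ⟨wrefl α γ, ⟨wrefl_mem_pos hR hP hα hγp hγα, ?_⟩, hss γ⟩
    have := congrArg (wrefl α) hγw
    rw [hss, map_neg] at this
    exact this
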